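/- Let G be a tree of order n where vertex n has degree 1 with neighbor k, and let A be a nonnegative symmetric n×n matrix. Define the (n−1)×(n−1) matrix A' by a'_{i,j} = a_{i,j} if i,j ≠ k, a'_{k,j} = a_{k,j} + a_{n,j}, and a'_{i,k} = a_{i,k} + a_{i,n}. Then F_A(G) = Σ_{j=1}^{n−1} a_{j,n} + F_{A'}(G−n). -/
import Mathlib


open SimpleGraph Finset

/-- `F_A(G) = ∑_{i<j} d_G(i,j) · a_{i,j}`. -/
noncomputable def FA {n : ℕ} (A : Matrix (Fin n) (Fin n) ℝ) (G : SimpleGraph (Fin n)) : ℝ :=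
  ∑ i : Fin n, ∑ j : Fin n, if i < j then (G.dist i j : ℝ) * A i j else 0

/-- `G` is a path on its vertex set (isomorphic to the path graph). -/
def IsPathGraph {n : ℕ} (G : SimpleGraph (Fin n)) : Prop :=
  Nonempty (G ≃g SimpleGraph.pathGraph n)

/-- The distance matrix of `G`. -/
noncomputable def distMat {n : ℕ} (G : SimpleGraph (Fin n)) : Matrix (Fin n) (Fin n) ℝ :=
  fun i j => (G.dist i j : ℝ)

/-- The diagonal matrix of row sums of the distance matrix. -/
noncomputable def transMat {n : ℕ} (G : SimpleGraph (Fin n)) : Matrix (Fin n) (Fin n) ℝ :=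
  Matrix.diagonal fun i => ∑ j : Fin n, (G.dist i j : ℝ)

/-- Distance signless Laplacian `D^Q(G) = T(G) + D(G)`. -/
noncomputable def DQmat {n : ℕ} (G : SimpleGraph (Fin n)) : Matrix (Fin n) (Fin n) ℝ :=
  transMat G + distMat G

/-- Distance Laplacian `D^L(G) = T(G) - D(G)`. -/
noncomputable def DLmat {n : ℕ} (G : SimpleGraph (Fin n)) : Matrix (Fin n) (Fin n) ℝ :=
  transMat G - distMat G

/-- Largest eigenvalue of a matrix, as the supremum of its spectrum. -/
noncomputable def maxEig {n : ℕ} (M : Matrix (Fin n) (Fin n) ℝ) : ℝ :=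
  sSup (spectrum ℝ M)

lemma aux_walk_down {n : ℕ} (G : SimpleGraph (Fin (n+1))) (k : Fin n)
    (huniq : ∀ j : Fin (n + 1), G.Adj (Fin.last n) j → j = k.castSucc) :
    ∀ (N : ℕ) (u v : Fin (n+1)) (hu : u ≠ Fin.last n) (hv : v ≠ Fin.last n)
      (p : G.Walk u v), p.length ≤ N →
      ∃ q : (G.comap Fin.castSucc).Walk (u.castPred hu) (v.castPred hv),
        q.length ≤ p.length := by
  intro N
  induction N with
  | zero =>
    intro u v hu hv p hp
    cases p with
    | nil => exact ⟨SimpleGraph.Walk.nil, by simp⟩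
    | cons h q => simp at hp
  | succ N ih =>
    intro u v hu hv p hp
    cases p with
    | nil => exact ⟨SimpleGraph.Walk.nil, by simp⟩
    | @cons _ w _ h q =>
      by_cases hw : w = Fin.last n
      · subst hw
        have hu' : u = k.castSucc := huniq u h.symm
        cases q with
        | nil => exact absurd rfl hv
        | @cons _ x _ h' r =>
          have hx : x = k.castSucc := huniq x h'
          subst hx
          subst hu'
          have hlen : r.length ≤ N := by
            simp only [SimpleGraph.Walk.length_cons] at hp
            omega
          obtain ⟨q', hq'⟩ := ih _ v hu hv r hlen
          exact ⟨q', by simp only [SimpleGraph.Walk.length_cons]; omega⟩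
      · have hlen : q.length ≤ N := by
          simp only [SimpleGraph.Walk.length_cons] at hp
          omega
        obtain ⟨q', hq'⟩ := ih w v hw hv q hlen
        have hadj' : (G.comap Fin.castSucc).Adj (u.castPred hu) (w.castPred hw) := by
          simpa [SimpleGraph.comap_adj, Fin.castSucc_castPred] using h
        exact ⟨SimpleGraph.Walk.cons hadj' q', by
          simp only [SimpleGraph.Walk.length_cons]; omega⟩

def castSuccHom {n : ℕ} (G : SimpleGraph (Fin (n+1))) : G.comap Fin.castSucc →g G :=
  ⟨Fin.castSucc, fun h => h⟩

lemma aux_dist_eq {n : ℕ} (G : SimpleGraph (Fin (n+1))) (hconn : G.Connected) (k : Fin n)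
    (huniq : ∀ j : Fin (n + 1), G.Adj (Fin.last n) j → j = k.castSucc)
    (u v : Fin n) :
    (G.comap Fin.castSucc).dist u v = G.dist u.castSucc v.castSucc := by
  obtain ⟨p, hp⟩ := hconn.exists_walk_length_eq_dist u.castSucc v.castSucc
  obtain ⟨q, hq⟩ := aux_walk_down G k huniq p.length u.castSucc v.castSucc
    (Fin.castSucc_lt_last u).ne (Fin.castSucc_lt_last v).ne p le_rfl
  simp only [Fin.castPred_castSucc] at q hq
  apply le_antisymm
  · calc (G.comap Fin.castSucc).dist u v ≤ q.length := SimpleGraph.dist_le q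
    _ ≤ p.length := hq
    _ = _ := hp
  · have hreach : (G.comap Fin.castSucc).Reachable u v := ⟨q⟩
    obtain ⟨r, hr⟩ := hreach.exists_walk_length_eq_dist
    have h1 : G.dist u.castSucc v.castSucc ≤ (r.map (castSuccHom G)).length :=
      SimpleGraph.dist_le _
    rwa [SimpleGraph.Walk.length_map, hr] at h1

lemma aux_pendant {n : ℕ} (G : SimpleGraph (Fin (n+1))) (hconn : G.Connected) (k : Fin n)
    (hadj : G.Adj (Fin.last n) k.castSucc)
    (huniq : ∀ j : Fin (n + 1), G.Adj (Fin.last n) j → j = k.castSucc)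
    (i : Fin n) :
    G.dist i.castSucc (Fin.last n) = G.dist i.castSucc k.castSucc + 1 := by
  have hle : G.dist i.castSucc (Fin.last n) ≤ G.dist i.castSucc k.castSucc + 1 := by
    have h1 : G.dist k.castSucc (Fin.last n) = 1 :=
      SimpleGraph.dist_eq_one_iff_adj.mpr hadj.symm
    calc G.dist i.castSucc (Fin.last n)
        ≤ G.dist i.castSucc k.castSucc + G.dist k.castSucc (Fin.last n) :=
          hconn.dist_triangle
      _ = G.dist i.castSucc k.castSucc + 1 := by rw [h1]
  have hge : G.dist i.castSucc k.castSucc + 1 ≤ G.dist i.castSucc (Fin.last n) := by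
    obtain ⟨p, hp⟩ := hconn.exists_walk_length_eq_dist (Fin.last n) i.castSucc
    obtain ⟨x, h, r, rfl⟩ := SimpleGraph.Walk.exists_eq_cons_of_ne
      (Fin.castSucc_lt_last i).ne' p
    have hx : x = k.castSucc := huniq x h
    subst hx
    have : G.dist k.castSucc i.castSucc ≤ r.length := SimpleGraph.dist_le r
    simp only [SimpleGraph.Walk.length_cons] at hp
    have hc1 : G.dist i.castSucc (Fin.last n) = G.dist (Fin.last n) i.castSucc :=
      SimpleGraph.dist_comm
    have hc2 : G.dist i.castSucc k.castSucc = G.dist k.castSucc i.castSucc :=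
      SimpleGraph.dist_comm
    omega
  omega

lemma aux_half_sum {m : ℕ} (f g : Fin m → Fin m → ℝ) (hf : ∀ i j, f i j = f j i)
    (hg : ∀ i j, g i j = g j i) (hd : ∀ i, f i i = 0) :
    2 * (∑ i : Fin m, ∑ j : Fin m, if i < j then f i j * g i j else 0)
      = ∑ i : Fin m, ∑ j : Fin m, f i j * g i j := by
  have h2 : (∑ i : Fin m, ∑ j : Fin m, if i < j then f i j * g i j else 0)
      = ∑ i : Fin m, ∑ j : Fin m, if j < i then f i j * g i j else 0 := by
    rw [Finset.sum_comm]
    refine Finset.sum_congr rfl fun i _ => Finset.sum_congr rfl fun j _ => ?_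
    rw [hf, hg]
  rw [two_mul]
  nth_rewrite 2 [h2]
  rw [← Finset.sum_add_distrib]
  refine Finset.sum_congr rfl fun i _ => ?_
  rw [← Finset.sum_add_distrib]
  refine Finset.sum_congr rfl fun j _ => ?_
  rcases lt_trichotomy i j with h | h | h
  · simp [h, asymm h]
  · subst h; simp [hd]
  · simp [h, asymm h]

theorem stmt_13 {n : ℕ} (G : SimpleGraph (Fin (n + 1))) (hG : G.IsTree)
    (k : Fin n) (hadj : G.Adj (Fin.last n) k.castSucc)
    (huniq : ∀ j : Fin (n + 1), G.Adj (Fin.last n) j → j = k.castSucc)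
    (A : Matrix (Fin (n + 1)) (Fin (n + 1)) ℝ) (hsymm : A.IsSymm)
    (hnn : ∀ i j, 0 ≤ A i j)
    (A' : Matrix (Fin n) (Fin n) ℝ)
    (hA' : ∀ i j : Fin n, A' i j =
      if i = k then A k.castSucc j.castSucc + A (Fin.last n) j.castSucc
      else if j = k then A i.castSucc k.castSucc + A i.castSucc (Fin.last n)
      else A i.castSucc j.castSucc) :
    FA A G = (∑ j : Fin n, A j.castSucc (Fin.last n)) +
      FA A' (SimpleGraph.comap Fin.castSucc G) := by
  have hconn : G.Connected := hG.isConnected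
  set G' : SimpleGraph (Fin n) := SimpleGraph.comap Fin.castSucc G with hG'def
  have hs : ∀ a b, A a b = A b a := fun a b => hsymm.apply b a
  have hD : ∀ i j : Fin n,
      ((G.dist i.castSucc j.castSucc : ℕ) : ℝ) = ((G'.dist i j : ℕ) : ℝ) := by
    intro i j; rw [aux_dist_eq G hconn k huniq]
  have hP : ∀ i : Fin n,
      ((G.dist i.castSucc (Fin.last n) : ℕ) : ℝ) = ((G'.dist i k : ℕ) : ℝ) + 1 := by
    intro i
    rw [aux_pendant G hconn k hadj huniq i, ← aux_dist_eq G hconn k huniq]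
    push_cast; ring
  have hP' : ∀ j : Fin n,
      ((G.dist (Fin.last n) j.castSucc : ℕ) : ℝ) = ((G'.dist j k : ℕ) : ℝ) + 1 := by
    intro j; rw [SimpleGraph.dist_comm]; exact hP j
  have hDsym : ∀ i j : Fin n, ((G'.dist i j : ℕ) : ℝ) = ((G'.dist j i : ℕ) : ℝ) := by
    intro i j; rw [SimpleGraph.dist_comm]
  set T : ℝ := ∑ i : Fin n, A i.castSucc (Fin.last n) with hT
  set U : ℝ := ∑ i : Fin n, ((G'.dist i k : ℕ) : ℝ) * A i.castSucc (Fin.last n) with hU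
  set S : ℝ := ∑ i : Fin n, ∑ j : Fin n,
      ((G'.dist i j : ℕ) : ℝ) * A i.castSucc j.castSucc with hS
  -- key 1
  have key1 : 2 * FA A G = S + 2 * U + 2 * T := by
    have e1 : 2 * FA A G = ∑ i : Fin (n+1), ∑ j : Fin (n+1), (G.dist i j : ℝ) * A i j := by
      simp only [FA]
      exact aux_half_sum _ _ (fun i j => by rw [SimpleGraph.dist_comm]) hs
        (fun i => by simp)
    rw [e1]
    calc (∑ i : Fin (n+1), ∑ j : Fin (n+1), (G.dist i j : ℝ) * A i j)
        = (∑ i : Fin n, ((∑ j : Fin n, ((G'.dist i j : ℕ) : ℝ) * A i.castSucc j.castSucc)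
            + (((G'.dist i k : ℕ) : ℝ) + 1) * A i.castSucc (Fin.last n)))
          + ((∑ j : Fin n, (((G'.dist j k : ℕ) : ℝ) + 1) * A j.castSucc (Fin.last n)) + 0) := by
          rw [Fin.sum_univ_castSucc]
          congr 1
          · refine Finset.sum_congr rfl fun i _ => ?_
            rw [Fin.sum_univ_castSucc]
            congr 1
            · exact Finset.sum_congr rfl fun j _ => by rw [hD]
            · rw [hP]
          · rw [Fin.sum_univ_castSucc]
            congr 1
            · refine Finset.sum_congr rfl fun j _ => ?_
              rw [hP' j, hs (Fin.last n) j.castSucc]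
            · simp
      _ = S + 2 * U + 2 * T := by
          rw [Finset.sum_add_distrib]
          have h2 : (∑ i : Fin n, (((G'.dist i k : ℕ) : ℝ) + 1) * A i.castSucc (Fin.last n))
              = U + T := by
            rw [hU, hT, ← Finset.sum_add_distrib]
            exact Finset.sum_congr rfl fun i _ => by ring
          rw [h2, ← hS]
          ring
  -- key 2
  have key2 : 2 * FA A' G' = S + 2 * U := by
    have hA'sym : ∀ i j : Fin n, A' i j = A' j i := by
      intro i j
      rcases eq_or_ne i k with hi | hi <;> rcases eq_or_ne j k with hj | hj
      · rw [hi, hj]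
      · rw [hi, hA' k j, hA' j k, if_pos rfl, if_neg hj, if_pos rfl,
          hs k.castSucc j.castSucc, hs (Fin.last n) j.castSucc]
      · rw [hj, hA' i k, hA' k i, if_neg hi, if_pos rfl, if_pos rfl,
          hs i.castSucc k.castSucc, hs i.castSucc (Fin.last n)]
      · rw [hA' i j, hA' j i, if_neg hi, if_neg hj, if_neg hj, if_neg hi]
        exact hs _ _
    have e1 : 2 * FA A' G' = ∑ i : Fin n, ∑ j : Fin n, ((G'.dist i j : ℕ) : ℝ) * A' i j := by
      simp only [FA]
      exact aux_half_sum _ _ (fun i j => by rw [SimpleGraph.dist_comm]) hA'sym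
        (fun i => by simp)
    rw [e1]
    have point : ∀ i j : Fin n, ((G'.dist i j : ℕ) : ℝ) * A' i j
        = ((G'.dist i j : ℕ) : ℝ) * A i.castSucc j.castSucc
          + (if i = k then ((G'.dist i j : ℕ) : ℝ) * A (Fin.last n) j.castSucc else 0)
          + (if j = k then ((G'.dist i j : ℕ) : ℝ) * A i.castSucc (Fin.last n) else 0) := by
      intro i j
      rcases eq_or_ne i k with hi | hi <;> rcases eq_or_ne j k with hj | hj
      · rw [hi, hj]
        simp [SimpleGraph.dist_self]
      · rw [hi, hA' k j, if_pos rfl, if_pos rfl, if_neg hj]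
        ring
      · rw [hj, hA' i k, if_neg hi, if_pos rfl, if_neg hi, if_pos rfl]
        ring
      · rw [hA' i j, if_neg hi, if_neg hj, if_neg hi, if_neg hj]
        ring
    calc (∑ i : Fin n, ∑ j : Fin n, ((G'.dist i j : ℕ) : ℝ) * A' i j)
        = (∑ i : Fin n, ∑ j : Fin n, ((G'.dist i j : ℕ) : ℝ) * A i.castSucc j.castSucc)
          + (∑ i : Fin n, ∑ j : Fin n,
              (if i = k then ((G'.dist i j : ℕ) : ℝ) * A (Fin.last n) j.castSucc else 0))
          + (∑ i : Fin n, ∑ j : Fin n,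
              (if j = k then ((G'.dist i j : ℕ) : ℝ) * A i.castSucc (Fin.last n) else 0)) := by
          rw [← Finset.sum_add_distrib, ← Finset.sum_add_distrib]
          refine Finset.sum_congr rfl fun i _ => ?_
          rw [← Finset.sum_add_distrib, ← Finset.sum_add_distrib]
          exact Finset.sum_congr rfl fun j _ => point i j
      _ = S + U + U := by
          have mid : (∑ i : Fin n, ∑ j : Fin n,
              (if i = k then ((G'.dist i j : ℕ) : ℝ) * A (Fin.last n) j.castSucc else 0))
              = U := by
            have step1 : ∀ i : Fin n, (∑ j : Fin n,
                (if i = k then ((G'.dist i j : ℕ) : ℝ) * A (Fin.last n) j.castSucc else 0))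
                = if i = k then (∑ j : Fin n,
                    ((G'.dist i j : ℕ) : ℝ) * A (Fin.last n) j.castSucc) else 0 := by
              intro i
              by_cases hi : i = k <;> simp [hi]
            rw [Finset.sum_congr rfl fun i _ => step1 i, Finset.sum_ite_eq' univ k,
              if_pos (Finset.mem_univ k), hU]
            refine Finset.sum_congr rfl fun j _ => ?_
            rw [hDsym k j, hs (Fin.last n) j.castSucc]
          have lst : (∑ i : Fin n, ∑ j : Fin n,
              (if j = k then ((G'.dist i j : ℕ) : ℝ) * A i.castSucc (Fin.last n) else 0))
              = U := by
            rw [hU]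
            refine Finset.sum_congr rfl fun i _ => ?_
            rw [Finset.sum_ite_eq' univ k, if_pos (Finset.mem_univ k)]
          rw [mid, lst, hS]
      _ = S + 2 * U := by ring
  linarith
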